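/- Weak blockedness property: let x₁,…,xₙ ∈ ℝ^d with n ≥ d + 1 and d ≥ 1, and let ν be a norm on ℝ^d. Then there exists (β*, α*) with β* ≠ 0 minimizing the center objective max_{i=1,…,n} |βᵀxᵢ + α| / ν(β) over all (β, α) ∈ ℝ^d × ℝ with β ≠ 0, such that the hyperplane H(β*,α*) is at maximum distance from at least d + 1 of the points: #{i : |β*ᵀxᵢ + α*| / ν(β*) = max_{k} |β*ᵀx_k + α*| / ν(β*)} ≥ d + 1. -/

import Mathlib

open Finset

/-- The center objective: the maximum over the `n` points (for `n ≥ 1`) of the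
norm-based residuals `|βᵀxᵢ + α| / ν(β)`. -/
noncomputable def maxRes {n d : ℕ} (hn : 0 < n) (x : Fin n → Fin d → ℝ)
    (ν : Seminorm ℝ (Fin d → ℝ)) (β : Fin d → ℝ) (α : ℝ) : ℝ :=
  Finset.univ.sup' (Finset.univ_nonempty_iff.mpr ⟨⟨0, hn⟩⟩)
    (fun i => |(∑ ℓ : Fin d, β ℓ * x i ℓ) + α| / ν β)

namespace Blocked

variable {n d : ℕ}

/-- numerator of residual -/
def resNum (x : Fin n → Fin d → ℝ) (β : Fin d → ℝ) (α : ℝ) (i : Fin n) : ℝ :=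
  (∑ ℓ : Fin d, β ℓ * x i ℓ) + α

lemma resNum_comb (x : Fin n → Fin d → ℝ) (β δ : Fin d → ℝ) (α δα t : ℝ) (i : Fin n) :
    resNum x (β + t • δ) (α + t * δα) i = resNum x β α i + t * resNum x δ δα i := by
  simp only [resNum, Pi.add_apply, Pi.smul_apply, smul_eq_mul, add_mul, mul_add,
    Finset.sum_add_distrib, Finset.mul_sum]
  ring

lemma resNum_smul (x : Fin n → Fin d → ℝ) (β : Fin d → ℝ) (α c : ℝ) (i : Fin n) :
    resNum x (c • β) (c * α) i = c * resNum x β α i := by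
  simp only [resNum, Pi.smul_apply, smul_eq_mul, mul_add, Finset.mul_sum, mul_assoc]

lemma seminorm_sum_le (ν : Seminorm ℝ (Fin d → ℝ)) {ι : Type*} (s : Finset ι)
    (f : ι → (Fin d → ℝ)) : ν (∑ i ∈ s, f i) ≤ ∑ i ∈ s, ν (f i) := by
  classical
  induction s using Finset.induction_on with
  | empty => simp
  | insert a s' hx ih =>
    rw [Finset.sum_insert hx, Finset.sum_insert hx]
    exact le_trans (map_add_le_add ν _ _) (add_le_add_right ih _)

lemma nu_cont (ν : Seminorm ℝ (Fin d → ℝ)) : Continuous ν := by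
  set w : Fin d → (Fin d → ℝ) := fun ℓ => Pi.single ℓ (1:ℝ) with hw
  have hb : ∀ z : Fin d → ℝ, ν z ≤ (∑ ℓ : Fin d, ν (w ℓ)) * ‖z‖ := by
    intro z
    have h1 : z = ∑ ℓ : Fin d, (z ℓ) • w ℓ := by
      funext j
      simp [hw, Pi.single_apply, Finset.sum_apply, eq_comm]
    calc ν z = ν (∑ ℓ : Fin d, (z ℓ) • w ℓ) := by rw [← h1]
    _ ≤ ∑ ℓ : Fin d, ν ((z ℓ) • w ℓ) := seminorm_sum_le ν _ _
    _ ≤ ∑ ℓ : Fin d, ν (w ℓ) * ‖z‖ := by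
        apply Finset.sum_le_sum
        intro ℓ _
        rw [map_smul_eq_mul, mul_comm]
        exact mul_le_mul_of_nonneg_left (norm_le_pi_norm z ℓ) (apply_nonneg ν _)
    _ = _ := by rw [← Finset.sum_mul]
  have hC : 0 ≤ (∑ ℓ : Fin d, ν (w ℓ)) :=
    Finset.sum_nonneg fun ℓ _ => apply_nonneg ν _
  rw [Metric.continuous_iff]
  intro b ε hε
  by_cases hCz : (∑ ℓ : Fin d, ν (w ℓ)) = 0
  · exact ⟨1, one_pos, fun a _ => by
      have h1 := hb (a - b)
      rw [hCz, zero_mul] at h1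
      have h2 : |ν a - ν b| ≤ ν (a - b) := abs_sub_map_le_sub ν a b
      rw [Real.dist_eq]
      calc |ν a - ν b| ≤ ν (a-b) := h2
      _ ≤ 0 := h1
      _ < ε := hε⟩
  · have hCpos : 0 < (∑ ℓ : Fin d, ν (w ℓ)) := lt_of_le_of_ne hC (Ne.symm hCz)
    refine ⟨ε / (∑ ℓ : Fin d, ν (w ℓ)), by positivity, fun a ha => ?_⟩
    have h2 : |ν a - ν b| ≤ ν (a - b) := abs_sub_map_le_sub ν a b
    have h3 := hb (a - b)
    rw [Real.dist_eq]
    calc |ν a - ν b| ≤ (∑ ℓ : Fin d, ν (w ℓ)) * ‖a - b‖ := h2.trans h3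
    _ < (∑ ℓ : Fin d, ν (w ℓ)) * (ε / (∑ ℓ : Fin d, ν (w ℓ))) := by
        apply mul_lt_mul_of_pos_left _ hCpos
        rwa [← dist_eq_norm]
    _ = ε := by field_simp

end Blocked

namespace Blocked

variable {n d : ℕ}

noncomputable def bigN (hn : 0 < n) (x : Fin n → Fin d → ℝ) (β : Fin d → ℝ) (α : ℝ) : ℝ :=
  Finset.univ.sup' (Finset.univ_nonempty_iff.mpr ⟨⟨0, hn⟩⟩) (fun i => |resNum x β α i|)

lemma maxRes_eq_div (hn : 0 < n) (x : Fin n → Fin d → ℝ) (ν : Seminorm ℝ (Fin d → ℝ))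
    (β : Fin d → ℝ) (α : ℝ) : maxRes hn x ν β α = bigN hn x β α / ν β := by
  have h : (Finset.univ.sup' (Finset.univ_nonempty_iff.mpr ⟨⟨0, hn⟩⟩)
        (fun i => |resNum x β α i|)) / ν β
      = Finset.univ.sup' (Finset.univ_nonempty_iff.mpr ⟨⟨0, hn⟩⟩)
        (fun i => |resNum x β α i| / ν β) :=
    Finset.comp_sup'_eq_sup'_comp _ (fun r : ℝ => r / ν β)
      (fun a b => (max_div_div_right (apply_nonneg ν β) a b).symm)
  rw [maxRes]
  unfold bigN
  rw [h]
  rfl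

lemma le_bigN (hn : 0 < n) (x : Fin n → Fin d → ℝ) (β : Fin d → ℝ) (α : ℝ) (i : Fin n) :
    |resNum x β α i| ≤ bigN hn x β α :=
  Finset.le_sup' (fun i => |resNum x β α i|) (Finset.mem_univ i)

lemma bigN_nonneg (hn : 0 < n) (x : Fin n → Fin d → ℝ) (β : Fin d → ℝ) (α : ℝ) :
    0 ≤ bigN hn x β α :=
  le_trans (abs_nonneg _) (le_bigN hn x β α ⟨0, hn⟩)

lemma exists_eq_bigN (hn : 0 < n) (x : Fin n → Fin d → ℝ) (β : Fin d → ℝ) (α : ℝ) :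
    ∃ i, bigN hn x β α = |resNum x β α i| := by
  obtain ⟨i, -, h⟩ := Finset.exists_mem_eq_sup' (Finset.univ_nonempty_iff.mpr ⟨⟨0, hn⟩⟩)
    (fun i => |resNum x β α i|)
  exact ⟨i, h⟩

lemma bigN_smul (hn : 0 < n) (x : Fin n → Fin d → ℝ) (β : Fin d → ℝ) (α c : ℝ) (hc : 0 ≤ c) :
    bigN hn x (c • β) (c * α) = c * bigN hn x β α := by
  have h : c * (Finset.univ.sup' (Finset.univ_nonempty_iff.mpr ⟨⟨0, hn⟩⟩)
        (fun i => |resNum x β α i|))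
      = Finset.univ.sup' (Finset.univ_nonempty_iff.mpr ⟨⟨0, hn⟩⟩)
        (fun i => c * |resNum x β α i|) :=
    Finset.comp_sup'_eq_sup'_comp _ (fun r : ℝ => c * r)
      (fun a b => mul_max_of_nonneg a b hc)
  unfold bigN
  rw [h]
  congr 1
  funext i
  rw [resNum_smul, abs_mul, abs_of_nonneg hc]

lemma maxRes_smul (hn : 0 < n) (x : Fin n → Fin d → ℝ) (ν : Seminorm ℝ (Fin d → ℝ))
    (β : Fin d → ℝ) (α c : ℝ) (hc : 0 < c) :
    maxRes hn x ν (c • β) (c * α) = maxRes hn x ν β α := by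
  rw [maxRes_eq_div, maxRes_eq_div, bigN_smul hn x β α c hc.le]
  have : ν (c • β) = c * ν β := by
    rw [map_smul_eq_mul]; congr 1; exact abs_of_pos hc
  rw [this, mul_div_mul_left _ _ (ne_of_gt hc)]

lemma nu_lower (hd : 1 ≤ d) (ν : Seminorm ℝ (Fin d → ℝ))
    (hν : ∀ β : Fin d → ℝ, β ≠ 0 → 0 < ν β) :
    ∃ c : ℝ, 0 < c ∧ ∀ β : Fin d → ℝ, c * ‖β‖ ≤ ν β := by
  have hnt : Nontrivial (Fin d → ℝ) := by
    refine ⟨0, fun _ => 1, fun h => ?_⟩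
    have := congrFun h ⟨0, hd⟩
    simp at this
  have hsp : (Metric.sphere (0 : Fin d → ℝ) 1).Nonempty :=
    NormedSpace.sphere_nonempty.mpr zero_le_one
  obtain ⟨b₀, hb₀m, hb₀⟩ := (isCompact_sphere (0 : Fin d → ℝ) 1).exists_isMinOn hsp
    (nu_cont ν).continuousOn
  have hb₀n : ‖b₀‖ = 1 := by simpa using hb₀m
  have hb₀ne : b₀ ≠ 0 := by
    intro h; rw [h] at hb₀n; simp at hb₀n
  refine ⟨ν b₀, hν b₀ hb₀ne, fun β => ?_⟩
  rcases eq_or_ne β 0 with rfl | hβ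
  · simp
  · have hnorm : 0 < ‖β‖ := norm_pos_iff.mpr hβ
    have hmem : (‖β‖⁻¹ • β) ∈ Metric.sphere (0 : Fin d → ℝ) 1 := by
      simp [norm_smul, abs_of_pos (inv_pos.mpr hnorm), inv_mul_cancel₀ (ne_of_gt hnorm)]
    have h2 : ν (‖β‖⁻¹ • β) = ‖β‖⁻¹ * ν β := by
      rw [map_smul_eq_mul]; congr 1; exact abs_of_pos (inv_pos.mpr hnorm)
    have h3 : ν b₀ ≤ ‖β‖⁻¹ * ν β := by
      have := hb₀ hmem
      simpa [h2] using this
    calc ν b₀ * ‖β‖ ≤ (‖β‖⁻¹ * ν β) * ‖β‖ := by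
          exact mul_le_mul_of_nonneg_right h3 hnorm.le
    _ = ν β := by field_simp


end Blocked

namespace Blocked

variable {n d : ℕ}

lemma bigN_continuous (hn : 0 < n) (x : Fin n → Fin d → ℝ) :
    Continuous (fun p : (Fin d → ℝ) × ℝ => bigN hn x p.1 p.2) := by
  classical
  set H : (Finset.univ : Finset (Fin n)).Nonempty := Finset.univ_nonempty_iff.mpr ⟨⟨0, hn⟩⟩
  set F : Fin n → ((Fin d → ℝ) × ℝ) → ℝ := fun i p => |resNum x p.1 p.2 i| with hF
  have hFc : ∀ i, Continuous (F i) := by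
    intro i
    have : Continuous (fun p : (Fin d → ℝ) × ℝ => (∑ ℓ : Fin d, p.1 ℓ * x i ℓ) + p.2) :=
      (continuous_finset_sum _ (fun ℓ _ =>
        ((continuous_apply ℓ).comp continuous_fst).mul continuous_const)).add continuous_snd
    exact this.abs
  have key : Continuous (Finset.univ.sup' H F) := by
    apply Finset.sup'_induction H F
    · intro f hf g hg
      exact hf.sup hg
    · intro i _
      exact hFc i
  have heq : (fun p : (Fin d → ℝ) × ℝ => bigN hn x p.1 p.2) = Finset.univ.sup' H F := by
    funext p
    rw [Finset.sup'_apply]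
    rfl
  rw [heq]
  exact key

lemma exists_min (hd : 1 ≤ d) (hn : 0 < n) (x : Fin n → Fin d → ℝ)
    (ν : Seminorm ℝ (Fin d → ℝ)) (hν : ∀ β : Fin d → ℝ, β ≠ 0 → 0 < ν β) :
    ∃ (βm : Fin d → ℝ) (αm : ℝ), βm ≠ 0 ∧
      ∀ (β : Fin d → ℝ) (α : ℝ), β ≠ 0 → maxRes hn x ν βm αm ≤ maxRes hn x ν β α := by
  classical
  obtain ⟨c, hc, hcb⟩ := nu_lower hd ν hν
  set H : (Finset.univ : Finset (Fin n)).Nonempty := Finset.univ_nonempty_iff.mpr ⟨⟨0, hn⟩⟩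
  set Xm : ℝ := Finset.univ.sup' H (fun i => ∑ ℓ : Fin d, |x i ℓ|) with hXm
  have hXm0 : 0 ≤ Xm := le_trans (Finset.sum_nonneg (fun ℓ _ => abs_nonneg _))
    (Finset.le_sup' (fun i => ∑ ℓ : Fin d, |x i ℓ|) (Finset.mem_univ (⟨0, hn⟩ : Fin n)))
  set M' : ℝ := Xm / c with hM'
  have hM'0 : 0 ≤ M' := div_nonneg hXm0 hc.le
  have hdot : ∀ β : Fin d → ℝ, ν β = 1 → ∀ i, |∑ ℓ : Fin d, β ℓ * x i ℓ| ≤ M' := by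
    intro β hβ i
    have hnb : ‖β‖ ≤ 1 / c := by
      rw [le_div_iff₀ hc, mul_comm]
      calc c * ‖β‖ ≤ ν β := hcb β
      _ = 1 := hβ
    calc |∑ ℓ : Fin d, β ℓ * x i ℓ| ≤ ∑ ℓ : Fin d, |β ℓ * x i ℓ| :=
          Finset.abs_sum_le_sum_abs _ _
    _ = ∑ ℓ : Fin d, |β ℓ| * |x i ℓ| := by simp [abs_mul]
    _ ≤ ∑ ℓ : Fin d, (1/c) * |x i ℓ| := by
        apply Finset.sum_le_sum
        intro ℓ _
        apply mul_le_mul_of_nonneg_right _ (abs_nonneg _)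
        calc |β ℓ| = ‖β ℓ‖ := rfl
        _ ≤ ‖β‖ := norm_le_pi_norm β ℓ
        _ ≤ 1/c := hnb
    _ = (1/c) * ∑ ℓ : Fin d, |x i ℓ| := by rw [Finset.mul_sum]
    _ ≤ (1/c) * Xm := by
        apply mul_le_mul_of_nonneg_left _ (by positivity)
        exact Finset.le_sup' (fun i => ∑ ℓ : Fin d, |x i ℓ|) (Finset.mem_univ i)
    _ = M' := by rw [hM']; ring
  -- reference point
  have hone : (fun _ : Fin d => (1:ℝ)) ≠ 0 := by
    intro h
    have := congrFun h ⟨0, hd⟩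
    simp at this
  set β₁ : Fin d → ℝ := (ν (fun _ => 1))⁻¹ • (fun _ => (1:ℝ)) with hβ₁
  have hν1 : 0 < ν (fun _ => 1) := hν _ hone
  have hβ₁ν : ν β₁ = 1 := by
    rw [hβ₁, map_smul_eq_mul, Real.norm_eq_abs, abs_of_pos (inv_pos.mpr hν1), inv_mul_cancel₀ (ne_of_gt hν1)]
  have hβ₁ne : β₁ ≠ 0 := by
    intro h
    rw [h, map_zero] at hβ₁ν
    norm_num at hβ₁ν
  set M : ℝ := 2 * M' + 1 with hM
  set K : Set ((Fin d → ℝ) × ℝ) := {β | ν β = 1} ×ˢ Set.Icc (-M) M with hK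
  have hM1 : 1 ≤ M := by rw [hM]; linarith
  have hKne : ((β₁, 0) : (Fin d → ℝ) × ℝ) ∈ K := by
    refine ⟨hβ₁ν, ?_⟩
    show (0:ℝ) ∈ Set.Icc (-M) M
    rw [Set.mem_Icc]
    constructor <;> linarith
  have hKc : IsCompact K := by
    apply IsCompact.prod _ isCompact_Icc
    apply Metric.isCompact_of_isClosed_isBounded
    · exact IsClosed.preimage (nu_cont ν) isClosed_singleton
    · apply (Metric.isBounded_closedBall (x := (0 : Fin d → ℝ)) (r := 1/c)).subset
      intro β hβ
      rw [Metric.mem_closedBall, dist_zero_right]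
      rw [le_div_iff₀ hc, mul_comm]
      calc c * ‖β‖ ≤ ν β := hcb β
      _ = 1 := hβ
  set G : ((Fin d → ℝ) × ℝ) → ℝ := fun p => bigN hn x p.1 p.2 / ν p.1 with hG
  have hGc : ContinuousOn G K := by
    apply ContinuousOn.div (bigN_continuous hn x).continuousOn
      ((nu_cont ν).comp continuous_fst).continuousOn
    intro p hp
    simp only [Function.comp_apply]
    rw [hp.1]
    norm_num
  obtain ⟨pm, hpmK, hpm⟩ := hKc.exists_isMinOn ⟨_, hKne⟩ hGc
  have hνm : ν pm.1 = 1 := hpmK.1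
  have hmne : pm.1 ≠ 0 := by
    intro h
    rw [h, map_zero] at hνm
    norm_num at hνm
  refine ⟨pm.1, pm.2, hmne, ?_⟩
  intro β α hβ
  rw [maxRes_eq_div, maxRes_eq_div]
  have hGmin : ∀ q ∈ K, G pm ≤ G q := fun q hq => hpm hq
  have hGmle : bigN hn x pm.1 pm.2 / ν pm.1 = G pm := rfl
  rw [hGmle]
  -- normalize (β, α)
  have hνβ : 0 < ν β := hν β hβ
  set t : ℝ := (ν β)⁻¹ with ht
  have htpos : 0 < t := inv_pos.mpr hνβ
  have hνtβ : ν (t • β) = 1 := by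
    rw [map_smul_eq_mul, Real.norm_eq_abs, abs_of_pos htpos, ht,
      inv_mul_cancel₀ (ne_of_gt hνβ)]
  have hscale : bigN hn x β α / ν β = bigN hn x (t • β) (t * α) / ν (t • β) := by
    rw [← maxRes_eq_div, ← maxRes_eq_div, maxRes_smul hn x ν β α t htpos]
  rw [hscale]
  by_cases hα : |t * α| ≤ M
  · have := hGmin (t • β, t * α) ⟨hνtβ, abs_le.mp hα⟩
    simp only [hG] at this
    exact this
  · -- large α case
    push_neg at hα
    have h1 : G pm ≤ G (β₁, 0) := hGmin _ hKne
    have h2 : G (β₁, 0) ≤ M' := by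
      rw [hG]
      simp only
      rw [hβ₁ν, div_one]
      obtain ⟨i, hi⟩ := exists_eq_bigN hn x β₁ 0
      rw [hi]
      have h5 := hdot β₁ hβ₁ν i
      have h0 : resNum x β₁ 0 i = ∑ ℓ : Fin d, β₁ ℓ * x i ℓ := by
        rw [resNum, add_zero]
      rw [h0]
      exact h5
    have h3 : M + - M' ≤ bigN hn x (t • β) (t * α) := by
      calc M + - M' ≤ |t * α| - M' := by linarith
      _ ≤ |t * α| - |∑ ℓ : Fin d, (t • β) ℓ * x ⟨0, hn⟩ ℓ| := by
          have := hdot (t • β) hνtβ ⟨0, hn⟩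
          linarith
      _ ≤ |(∑ ℓ : Fin d, (t • β) ℓ * x ⟨0, hn⟩ ℓ) + t * α| := by
          rw [add_comm]
          have := abs_sub_abs_le_abs_sub (t * α) (-(∑ ℓ : Fin d, (t • β) ℓ * x ⟨0, hn⟩ ℓ))
          simp only [abs_neg, sub_neg_eq_add] at this
          exact this
      _ ≤ bigN hn x (t • β) (t * α) := le_bigN hn x _ _ _
    rw [hνtβ, div_one]
    calc G pm ≤ M' := h1.trans h2
    _ ≤ M + - M' := by rw [hM]; linarith
    _ ≤ _ := h3

end Blocked

namespace Blocked

variable {n d : ℕ}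

lemma resNum_lin (x : Fin n → Fin d → ℝ) (β δ : Fin d → ℝ) (α δα a b : ℝ) (i : Fin n) :
    resNum x (a • β + b • δ) (a * α + b * δα) i
      = a * resNum x β α i + b * resNum x δ δα i := by
  simp only [resNum, Pi.add_apply, Pi.smul_apply, smul_eq_mul, add_mul, mul_add,
    Finset.sum_add_distrib, Finset.mul_sum]
  ring

lemma resNum_sub (x : Fin n → Fin d → ℝ) (β δ : Fin d → ℝ) (α δα t : ℝ) (i : Fin n) :
    resNum x (β - t • δ) (α - t * δα) i = resNum x β α i - t * resNum x δ δα i := by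
  have h := resNum_lin x β δ α δα 1 (-t) i
  simpa [neg_smul, one_smul, ← sub_eq_add_neg, neg_mul] using h

lemma resNum_add' (x : Fin n → Fin d → ℝ) (β δ : Fin d → ℝ) (α δα : ℝ) (i : Fin n) :
    resNum x (β + δ) (α + δα) i = resNum x β α i + resNum x δ δα i := by
  have h := resNum_lin x β δ α δα 1 1 i
  simpa using h

lemma exists_kernel (hn : 0 < n) (x : Fin n → Fin d → ℝ) (S : Finset (Fin n))
    (hSd : S.card ≤ d) :
    ∃ (κβ : Fin d → ℝ) (κα : ℝ), ¬(κβ = 0 ∧ κα = 0) ∧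
      ∀ i ∈ S, resNum x κβ κα i = 0 := by
  classical
  set LL : ((Fin d → ℝ) × ℝ) →ₗ[ℝ] ({i // i ∈ S} → ℝ) :=
    { toFun := fun z j => resNum x z.1 z.2 j.1
      map_add' := by
        intro a b
        funext j
        exact resNum_add' x a.1 b.1 a.2 b.2 j.1
      map_smul' := by
        intro c a
        funext j
        simpa using resNum_smul x a.1 a.2 c j.1 } with hLL
  have hfd : Module.finrank ℝ ((Fin d → ℝ) × ℝ) = d + 1 := by
    rw [Module.finrank_prod, Module.finrank_self, Module.finrank_fin_fun]
  have hcod : Module.finrank ℝ (({i // i ∈ S}) → ℝ) = S.card := by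
    rw [Module.finrank_fintype_fun_eq_card, Fintype.card_coe]
  have hni : ¬ Function.Injective LL := by
    intro hinj
    have := LinearMap.finrank_le_finrank_of_injective hinj
    rw [hfd, hcod] at this
    omega
  rw [Function.not_injective_iff] at hni
  obtain ⟨a, b, hab, hne⟩ := hni
  refine ⟨a.1 - b.1, a.2 - b.2, ?_, ?_⟩
  · rintro ⟨h1, h2⟩
    apply hne
    have ha1 : a.1 = b.1 := by rwa [sub_eq_zero] at h1
    have ha2 : a.2 = b.2 := by rwa [sub_eq_zero] at h2
    exact Prod.ext ha1 ha2
  · intro i hi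
    have := congrFun hab ⟨i, hi⟩
    have h3 := resNum_sub x a.1 b.1 a.2 b.2 1 i
    simp only [one_smul, one_mul] at h3
    rw [h3]
    simp only [hLL, LinearMap.coe_mk, AddHom.coe_mk] at this
    rw [this]
    ring

end Blocked

set_option maxHeartbeats 1000000 in
open Blocked in
/-- Weak blockedness property: for `n ≥ d + 1` points there exists an optimal center
hyperplane (minimizing the maximum of the norm-based residuals `|βᵀxᵢ + α| / ν(β)`)
that is at maximum distance from at least `d + 1` of the points. -/
theorem stmt17 {n d : ℕ} (hd : 1 ≤ d) (hn : d + 1 ≤ n)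
    (x : Fin n → Fin d → ℝ)
    (ν : Seminorm ℝ (Fin d → ℝ)) (hν : ∀ β : Fin d → ℝ, β ≠ 0 → 0 < ν β) :
    ∃ (βs : Fin d → ℝ) (αs : ℝ), βs ≠ 0 ∧
      (∀ (β : Fin d → ℝ) (α : ℝ), β ≠ 0 →
        maxRes (by omega) x ν βs αs ≤ maxRes (by omega) x ν β α) ∧
      d + 1 ≤ Nat.card {i : Fin n //
        |(∑ ℓ : Fin d, βs ℓ * x i ℓ) + αs| / ν βs = maxRes (by omega) x ν βs αs} := by
  classical
  have hn0 : 0 < n := by omega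
  obtain ⟨βm, αm, hβmne, hropt⟩ := Blocked.exists_min hd hn0 x ν hν
  set r : ℝ := maxRes hn0 x ν βm αm with hr
  set SS : (Fin d → ℝ) → ℝ → Finset (Fin n) := fun β α => Finset.univ.filter
    (fun i => |(∑ ℓ : Fin d, β ℓ * x i ℓ) + α| / ν β = maxRes hn0 x ν β α) with hSSdef
  set Opt : (Fin d → ℝ) → ℝ → Prop := fun β α => β ≠ 0 ∧ maxRes hn0 x ν β α = r
    with hOptdef
  set Cs : Set ℕ := {k | ∃ β α, Opt β α ∧ (SS β α).card = k} with hCs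
  have hCne : Cs.Nonempty := ⟨(SS βm αm).card, βm, αm, ⟨hβmne, rfl⟩, rfl⟩
  have hCbdd : BddAbove Cs := by
    refine ⟨n, ?_⟩
    rintro k ⟨β, α, -, rfl⟩
    calc (SS β α).card ≤ (Finset.univ : Finset (Fin n)).card := Finset.card_filter_le _ _
    _ = n := by simp
  have hmem := Nat.sSup_mem hCne hCbdd
  set k : ℕ := sSup Cs with hk
  obtain ⟨βs, αs, hOs, hcardk⟩ := hmem
  have hmaxcard : ∀ β α, Opt β α → (SS β α).card ≤ k := fun β α h =>
    le_csSup hCbdd ⟨β, α, h, rfl⟩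
  have hβsne : βs ≠ 0 := hOs.1
  have hval : maxRes hn0 x ν βs αs = r := hOs.2
  refine ⟨βs, αs, hβsne, ?_, ?_⟩
  · intro β α hβ
    exact le_of_eq_of_le hval (hropt β α hβ)
  · have hnat : Nat.card {i : Fin n //
        |(∑ ℓ : Fin d, βs ℓ * x i ℓ) + αs| / ν βs = maxRes (by omega : 0 < n) x ν βs αs}
        = (SS βs αs).card := by
      rw [Nat.card_eq_fintype_card, Fintype.card_subtype]
    rw [hnat]
    by_contra hcon
    push_neg at hcon
    have hSd : (SS βs αs).card ≤ d := by omega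
    have hνs : 0 < ν βs := hν βs hβsne
    set rt : ℝ := r * ν βs with hrt
    have hbigNs : bigN hn0 x βs αs = rt := by
      have h1 := maxRes_eq_div hn0 x ν βs αs
      rw [hval] at h1
      rw [hrt]
      exact (div_eq_iff (ne_of_gt hνs)).mp h1.symm
    have hmemS : ∀ i, i ∈ SS βs αs ↔ |resNum x βs αs i| = rt := by
      intro i
      rw [hSSdef]
      simp only [Finset.mem_filter, Finset.mem_univ, true_and]
      show (|resNum x βs αs i| / ν βs = maxRes hn0 x ν βs αs) ↔ _
      rw [hval, div_eq_iff (ne_of_gt hνs), ← hrt]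
    have hSne : ∃ i₀, i₀ ∈ SS βs αs := by
      obtain ⟨i₀, hi₀⟩ := exists_eq_bigN hn0 x βs αs
      exact ⟨i₀, (hmemS i₀).mpr (by rw [← hi₀, hbigNs])⟩
    obtain ⟨i₀, hi₀⟩ := hSne
    have hjlt : ∀ j, j ∉ SS βs αs → |resNum x βs αs j| < rt := by
      intro j hj
      have h1 : |resNum x βs αs j| ≤ rt := by
        rw [← hbigNs]; exact le_bigN hn0 x βs αs j
      exact lt_of_le_of_ne h1 (fun h => hj ((hmemS j).mpr h))
    have hrtnn : 0 ≤ rt := by rw [← hbigNs]; exact bigN_nonneg hn0 x βs αs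
    have hr0 : 0 ≤ r := by
      by_contra hneg
      push_neg at hneg
      nlinarith
    rcases eq_or_lt_of_le hr0 with hr00 | hrpos
    · -- r = 0 : every point attains
      have hrt0 : rt = 0 := by rw [hrt, ← hr00, zero_mul]
      have hall : SS βs αs = Finset.univ := by
        apply Finset.eq_univ_of_forall
        intro i
        rw [hmemS, hrt0]
        have h1 : |resNum x βs αs i| ≤ 0 := by
          rw [← hrt0, ← hbigNs]; exact le_bigN hn0 x βs αs i
        exact le_antisymm h1 (abs_nonneg _)
      rw [hall] at hSd
      simp at hSd
      omega
    · -- r > 0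
      have hrtpos : 0 < rt := by positivity
      set sg : Fin n → ℝ := fun i => if 0 ≤ resNum x βs αs i then 1 else -1 with hsgdef
      have hsgabs : ∀ i, |sg i| = 1 := by
        intro i
        rcases le_or_gt 0 (resNum x βs αs i) with h | h <;> simp [hsgdef, h, not_le.mpr]
      have hsg : ∀ i ∈ SS βs αs, resNum x βs αs i = sg i * rt := by
        intro i hi
        rw [hmemS] at hi
        simp only [hsgdef]
        rcases le_or_gt 0 (resNum x βs αs i) with h | h
        · rw [if_pos h, one_mul, ← hi, abs_of_nonneg h]
        · rw [if_neg (not_le.mpr h), ← hi, abs_of_neg h]; ring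
      obtain ⟨κβ, κα, hκne, hκS⟩ := exists_kernel hn0 x (SS βs αs) hSd
      have hκβ : κβ ≠ 0 := by
        intro h
        apply hκne
        refine ⟨h, ?_⟩
        have h1 := hκS i₀ hi₀
        rw [h] at h1
        simpa [resNum] using h1
      set δβ : ℝ → (Fin d → ℝ) := fun u => (-(rt)⁻¹) • βs + u • κβ with hδβ
      set δα : ℝ → ℝ := fun u => (-(rt)⁻¹) * αs + u * κα with hδα
      set ee : ℝ → Fin n → ℝ := fun u j => resNum x (δβ u) (δα u) j with hee
      have heS : ∀ u, ∀ i ∈ SS βs αs, ee u i = - sg i := by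
        intro u i hi
        rw [hee]
        simp only
        rw [hδβ, hδα, resNum_lin x βs κβ αs κα (-(rt)⁻¹) u i, hκS i hi, hsg i hi]
        field_simp
        ring
      have hpath : ∀ u t j, resNum x (βs - t • δβ u) (αs - t * δα u) j
          = resNum x βs αs j - t * ee u j := by
        intro u t j
        exact resNum_sub x βs (δβ u) αs (δα u) t j
      have hpathS : ∀ (u : ℝ) (t : ℝ), 0 ≤ t → ∀ i ∈ SS βs αs,
          |resNum x (βs - t • δβ u) (αs - t * δα u) i| = rt + t := by
        intro u t ht i hi
        rw [hpath, heS u i hi, hsg i hi]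
        have : sg i * rt - t * -sg i = sg i * (rt + t) := by ring
        rw [this, abs_mul, hsgabs i, one_mul, abs_of_nonneg (by linarith)]
      have claim1 : ∀ (β : Fin d → ℝ) (α : ℝ), r * ν β ≤ bigN hn0 x β α := by
        intro β α
        rcases eq_or_ne β 0 with rfl | hβ
        · rw [map_zero, mul_zero]; exact bigN_nonneg hn0 x 0 α
        · have h1 := hropt β α hβ
          rw [maxRes_eq_div hn0 x ν β α] at h1
          have hνβ : 0 < ν β := hν β hβ
          rw [le_div_iff₀ hνβ] at h1
          linarith [h1]
      have claim2 : ∀ (u : ℝ) (t : ℝ), 0 ≤ t → rt + t ≤ r * ν (βs - t • δβ u) := by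
        intro u
        have Hne : (Finset.univ : Finset (Fin n)).Nonempty := ⟨i₀, Finset.mem_univ i₀⟩
        set m : ℝ := min rt (Finset.univ.inf' Hne (fun j => if j ∈ SS βs αs then rt
          else (rt - |resNum x βs αs j|) / (|ee u j| + 1))) with hmdef
        set ε : ℝ := (1/2) * m with hεdef
        have hmpos : 0 < m := by
          rw [hmdef]
          apply lt_min hrtpos
          rw [Finset.lt_inf'_iff]
          intro j _
          by_cases hj : j ∈ SS βs αs
          · rw [if_pos hj]; exact hrtpos
          · rw [if_neg hj]
            have h1 := hjlt j hj
            have h2 : 0 < |ee u j| + 1 := by positivity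
            apply div_pos (by linarith) h2
        have hεpos : 0 < ε := by rw [hεdef]; linarith
        have hεrt : ε < rt := by
          have h1 : m ≤ rt := by rw [hmdef]; exact min_le_left _ _
          rw [hεdef]; linarith
        have hεj : ∀ j, j ∉ SS βs αs → |resNum x βs αs j| + ε * |ee u j| < rt - ε := by
          intro j hj
          have h1 : m ≤ (rt - |resNum x βs αs j|) / (|ee u j| + 1) := by
            rw [hmdef]
            refine le_trans (min_le_right _ _) ?_
            have := Finset.inf'_le (f := fun j => if j ∈ SS βs αs then rt
              else (rt - |resNum x βs αs j|) / (|ee u j| + 1)) (Finset.mem_univ j)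
            rwa [if_neg hj] at this
          have h2 : 0 < |ee u j| + 1 := by positivity
          have h3 : m * (|ee u j| + 1) ≤ rt - |resNum x βs αs j| := by
            rw [← div_mul_cancel₀ (rt - |resNum x βs αs j|) (ne_of_gt h2)]
            exact mul_le_mul_of_nonneg_right h1 (le_of_lt h2)
          have h4 : ε * (|ee u j| + 1) < rt - |resNum x βs αs j| := by
            have h5 : ε * (|ee u j| + 1) < m * (|ee u j| + 1) := by
              apply mul_lt_mul_of_pos_right _ h2
              rw [hεdef]; linarith
            linarith
          nlinarith [abs_nonneg (ee u j)]
        have hplus : ∀ j, resNum x (βs + ε • δβ u) (αs + ε * δα u) j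
            = resNum x βs αs j + ε * ee u j := fun j => resNum_comb x βs (δβ u) αs (δα u) ε j
        have hbound : bigN hn0 x (βs + ε • δβ u) (αs + ε * δα u) ≤ rt - ε := by
          apply Finset.sup'_le
          intro j _
          rw [hplus j]
          by_cases hj : j ∈ SS βs αs
          · rw [hsg j hj, heS u j hj]
            have h6 : sg j * rt + ε * -sg j = sg j * (rt - ε) := by ring
            rw [h6, abs_mul, hsgabs j, one_mul, abs_of_nonneg (by linarith)]
          · calc |resNum x βs αs j + ε * ee u j|
                ≤ |resNum x βs αs j| + |ε * ee u j| := abs_add_le _ _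
            _ = |resNum x βs αs j| + ε * |ee u j| := by
                rw [abs_mul, abs_of_pos hεpos]
            _ ≤ rt - ε := le_of_lt (hεj j hj)
        have hKey : r * ν (βs + ε • δβ u) ≤ rt - ε :=
          le_trans (claim1 _ _) hbound
        intro t ht
        have hconv2 : (t + ε) * ν βs ≤ ε * ν (βs - t • δβ u) + t * ν (βs + ε • δβ u) := by
          have hdecomp : (t + ε) • βs = ε • (βs - t • δβ u) + t • (βs + ε • δβ u) := by
            funext ℓ
            simp only [Pi.add_apply, Pi.smul_apply, Pi.sub_apply, smul_eq_mul]
            ring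
          have h7 : ν ((t + ε) • βs) = (t + ε) * ν βs := by
            rw [map_smul_eq_mul, Real.norm_eq_abs, abs_of_pos (by linarith)]
          rw [← h7, hdecomp]
          calc ν (ε • (βs - t • δβ u) + t • (βs + ε • δβ u))
              ≤ ν (ε • (βs - t • δβ u)) + ν (t • (βs + ε • δβ u)) := map_add_le_add ν _ _
          _ = ε * ν (βs - t • δβ u) + t * ν (βs + ε • δβ u) := by
              rw [map_smul_eq_mul, map_smul_eq_mul, Real.norm_eq_abs, Real.norm_eq_abs,
                abs_of_pos hεpos, abs_of_nonneg ht]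
        have h1 : r * ((t + ε) * ν βs) ≤ r * (ε * ν (βs - t • δβ u)
            + t * ν (βs + ε • δβ u)) := mul_le_mul_of_nonneg_left hconv2 hr0
        have h2 : t * (r * ν (βs + ε • δβ u)) ≤ t * (rt - ε) :=
          mul_le_mul_of_nonneg_left hKey ht
        have h3 : (t + ε) * rt ≤ ε * (r * ν (βs - t • δβ u))
            + t * (r * ν (βs + ε • δβ u)) := by
          calc (t + ε) * rt = r * ((t + ε) * ν βs) := by rw [hrt]; ring
          _ ≤ r * (ε * ν (βs - t • δβ u) + t * ν (βs + ε • δβ u)) := h1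
          _ = ε * (r * ν (βs - t • δβ u)) + t * (r * ν (βs + ε • δβ u)) := by ring
        have h4 : ε * (rt + t) ≤ ε * (r * ν (βs - t • δβ u)) := by nlinarith [h3, h2]
        exact le_of_mul_le_mul_left h4 hεpos
      have hBne : ∀ (u : ℝ) (t : ℝ), 0 ≤ t → 0 < ν (βs - t • δβ u) := by
        intro u t ht
        have h0 := claim2 u t ht
        rcases (apply_nonneg ν (βs - t • δβ u)).lt_or_eq with h | h
        · exact h
        · exfalso
          rw [← h, mul_zero] at h0
          linarith
      have hmemSS : ∀ (β : Fin d → ℝ) (α : ℝ) (i : Fin n), i ∈ SS β α ↔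
          |resNum x β α i| / ν β = maxRes hn0 x ν β α := by
        intro β α i
        simp only [hSSdef, Finset.mem_filter, Finset.mem_univ, true_and]
        exact Iff.rfl
      by_cases hbig : ∃ (u : ℝ) (t : ℝ) (j : Fin n), 0 ≤ t ∧ j ∉ SS βs αs ∧
          rt + t ≤ |resNum x βs αs j - t * ee u j|
      · obtain ⟨u, t₁, j₁, ht₁, hj₁, hcross⟩ := hbig
        set Ω : Set ℝ := Set.Icc 0 t₁ ∩ {t : ℝ | ∃ j, j ∉ SS βs αs ∧
          rt + t ≤ |resNum x βs αs j - t * ee u j|} with hΩ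
        have hΩne : t₁ ∈ Ω := ⟨⟨ht₁, le_refl t₁⟩, j₁, hj₁, hcross⟩
        have hΩbdd : BddBelow Ω := ⟨0, fun t htm => htm.1.1⟩
        have hΩclosed : IsClosed Ω := by
          apply IsClosed.inter isClosed_Icc
          have hrw : {t : ℝ | ∃ j, j ∉ SS βs αs ∧ rt + t ≤ |resNum x βs αs j - t * ee u j|}
              = ⋃ j : Fin n, {t : ℝ | j ∉ SS βs αs ∧
                  rt + t ≤ |resNum x βs αs j - t * ee u j|} := by
            ext t
            simp [Set.mem_iUnion]
          rw [hrw]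
          apply isClosed_iUnion_of_finite
          intro j
          by_cases hj : j ∈ SS βs αs
          · have hempty : {t : ℝ | j ∉ SS βs αs ∧
                rt + t ≤ |resNum x βs αs j - t * ee u j|} = ∅ := by
              ext t; simp [hj]
            rw [hempty]
            exact isClosed_empty
          · have heq2 : {t : ℝ | j ∉ SS βs αs ∧ rt + t ≤ |resNum x βs αs j - t * ee u j|}
                = {t : ℝ | rt + t ≤ |resNum x βs αs j - t * ee u j|} := by
              ext t; simp [hj]
            rw [heq2]
            apply isClosed_le
            · exact continuous_const.add continuous_id
            · exact (continuous_const.sub (continuous_id.mul continuous_const)).abs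
        set T : ℝ := sInf Ω with hTdef
        have hTmem : T ∈ Ω := IsClosed.csInf_mem hΩclosed ⟨t₁, hΩne⟩ hΩbdd
        have hT0 : 0 ≤ T := hTmem.1.1
        obtain ⟨j₂, hj₂S, hj₂⟩ := hTmem.2
        have hTpos : 0 < T := by
          rcases hT0.lt_or_eq with h | h
          · exact h
          · exfalso
            rw [← h] at hj₂
            simp only [zero_mul, sub_zero, add_zero] at hj₂
            linarith [hjlt j₂ hj₂S]
        have hbefore : ∀ t, 0 ≤ t → t < T → ∀ j, j ∉ SS βs αs →
            |resNum x βs αs j - t * ee u j| < rt + t := by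
          intro t ht htT j hj
          by_contra hge
          push_neg at hge
          have hmem2 : t ∈ Ω := ⟨⟨ht, le_trans htT.le hTmem.1.2⟩, j, hj, hge⟩
          have := csInf_le hΩbdd hmem2
          rw [← hTdef] at this
          linarith
        have hDle : ∀ t, 0 ≤ t → t < T → ν (βs - t • δβ u) ≤ (rt + t)/r := by
          intro t ht htT
          have hb : bigN hn0 x (βs - t • δβ u) (αs - t * δα u) ≤ rt + t := by
            apply Finset.sup'_le
            intro j _
            by_cases hj : j ∈ SS βs αs
            · exact le_of_eq (hpathS u t ht j hj)
            · rw [hpath u t j]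
              exact (hbefore t ht htT j hj).le
          have h22 := le_trans (claim1 _ _) hb
          rw [le_div_iff₀ hrpos, mul_comm]
          exact h22
        have hDT : ν (βs - T • δβ u) ≤ (rt + T)/r := by
          apply le_of_forall_pos_le_add
          intro η hη
          have hq0 : 0 < η / (ν (δβ u) + 1/r + 1) := by
            apply div_pos hη
            have : 0 < 1/r := by positivity
            positivity
          set s0 : ℝ := T - min T (η / (ν (δβ u) + 1/r + 1)) with hs0
          have hmin0 : 0 < min T (η / (ν (δβ u) + 1/r + 1)) := lt_min hTpos hq0
          have hs00 : 0 ≤ s0 := by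
            rw [hs0]
            have := min_le_left T (η / (ν (δβ u) + 1/r + 1))
            linarith
          have hsT : s0 < T := by rw [hs0]; linarith
          have hTs : T - s0 ≤ η / (ν (δβ u) + 1/r + 1) := by
            rw [hs0, sub_sub_cancel]
            exact min_le_right _ _
          have hlip : ν (βs - T • δβ u) ≤ ν (βs - s0 • δβ u) + (T - s0) * ν (δβ u) := by
            have hdec : βs - T • δβ u = (βs - s0 • δβ u) - (T - s0) • δβ u := by
              funext ℓ
              simp only [Pi.sub_apply, Pi.smul_apply, smul_eq_mul]
              ring
            conv_lhs => rw [hdec]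
            calc ν ((βs - s0 • δβ u) - (T - s0) • δβ u)
                ≤ ν (βs - s0 • δβ u) + ν ((T - s0) • δβ u) := map_sub_le_add ν _ _
            _ = _ := by
                rw [map_smul_eq_mul, Real.norm_eq_abs, abs_of_nonneg (by linarith)]
          have h20 := hDle s0 hs00 hsT
          have hsplit : (rt + s0)/r = (rt + T)/r - (T - s0) * (1/r) := by
            field_simp
            ring
          have hmul1 : (T - s0) * (ν (δβ u) + 1/r + 1) ≤ η := by
            have h23 := mul_le_mul_of_nonneg_right hTs
              (by positivity : (0:ℝ) ≤ ν (δβ u) + 1/r + 1)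
            rwa [div_mul_cancel₀ _ (by positivity : (ν (δβ u) + 1/r + 1) ≠ 0)] at h23
          have h24 : 0 ≤ T - s0 := by linarith
          have h25 : 0 ≤ (T - s0) * (1/r) := mul_nonneg h24 (by positivity)
          have hmul2 : (T - s0) * ν (δβ u) + (T - s0) * (1/r) + (T - s0) ≤ η := by
            have hexp : (T - s0) * (ν (δβ u) + 1/r + 1)
                = (T - s0) * ν (δβ u) + (T - s0) * (1/r) + (T - s0) := by ring
            linarith [hexp ▸ hmul1]
          calc ν (βs - T • δβ u) ≤ ν (βs - s0 • δβ u) + (T - s0) * ν (δβ u) := hlip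
          _ ≤ (rt + s0)/r + (T - s0) * ν (δβ u) := by linarith [h20]
          _ = (rt + T)/r - (T - s0) * (1/r) + (T - s0) * ν (δβ u) := by rw [hsplit]
          _ ≤ (rt + T)/r + η := by linarith [hmul2, h24, h25]
        have hDTeq : ν (βs - T • δβ u) = (rt + T)/r := by
          have h21 := claim2 u T hT0
          apply le_antisymm hDT
          rw [div_le_iff₀ hrpos, mul_comm]
          exact h21
        have hnumT : ∀ j, j ∉ SS βs αs → |resNum x βs αs j - T * ee u j| ≤ rt + T := by
          intro j hj
          apply le_of_forall_pos_le_add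
          intro η hη
          have hq0 : 0 < η / (|ee u j| + 1) := div_pos hη (by positivity)
          set s0 : ℝ := T - min T (η / (|ee u j| + 1)) with hs0
          have hmin0 : 0 < min T (η / (|ee u j| + 1)) := lt_min hTpos hq0
          have hs00 : 0 ≤ s0 := by
            rw [hs0]
            have := min_le_left T (η / (|ee u j| + 1))
            linarith
          have hsT : s0 < T := by rw [hs0]; linarith
          have hTs : T - s0 ≤ η / (|ee u j| + 1) := by
            rw [hs0, sub_sub_cancel]
            exact min_le_right _ _
          have h30 : |resNum x βs αs j - T * ee u j| - |resNum x βs αs j - s0 * ee u j|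
              ≤ (T - s0) * |ee u j| := by
            have h33 := abs_sub_abs_le_abs_sub (resNum x βs αs j - T * ee u j)
              (resNum x βs αs j - s0 * ee u j)
            have heq3 : (resNum x βs αs j - T * ee u j) - (resNum x βs αs j - s0 * ee u j)
                = -((T - s0) * ee u j) := by ring
            rw [heq3, abs_neg, abs_mul, abs_of_nonneg (by linarith : (0:ℝ) ≤ T - s0)] at h33
            exact h33
          have h31 := hbefore s0 hs00 hsT j hj
          have h32 : (T - s0) * (|ee u j| + 1) ≤ η := by
            have h34 := mul_le_mul_of_nonneg_right hTs
              (by positivity : (0:ℝ) ≤ |ee u j| + 1)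
            rwa [div_mul_cancel₀ _ (by positivity : (|ee u j| + 1) ≠ 0)] at h34
          nlinarith [h30, h31, h32, hsT]
        have hbigT : bigN hn0 x (βs - T • δβ u) (αs - T * δα u) = rt + T := by
          apply le_antisymm
          · apply Finset.sup'_le
            intro j _
            by_cases hj : j ∈ SS βs αs
            · exact le_of_eq (hpathS u T hT0 j hj)
            · rw [hpath u T j]
              exact hnumT j hj
          · calc rt + T = |resNum x (βs - T • δβ u) (αs - T * δα u) i₀| :=
                (hpathS u T hT0 i₀ hi₀).symm
            _ ≤ _ := le_bigN hn0 x _ _ i₀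
        have hBνpos : 0 < ν (βs - T • δβ u) := hBne u T hT0
        have hBβne : (βs - T • δβ u) ≠ 0 := by
          intro h
          rw [h, map_zero] at hBνpos
          exact lt_irrefl 0 hBνpos
        have hrtT : 0 < rt + T := by linarith
        have hdivr : (rt + T) / ((rt + T) / r) = r := by
          rw [div_div_eq_mul_div, mul_comm]
          exact mul_div_cancel_right₀ r (ne_of_gt hrtT)
        have hBval : maxRes hn0 x ν (βs - T • δβ u) (αs - T * δα u) = r := by
          rw [maxRes_eq_div hn0 x ν _ _, hbigT, hDTeq, hdivr]
        have hOptB : Opt (βs - T • δβ u) (αs - T * δα u) := ⟨hBβne, hBval⟩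
        have hsub : insert j₂ (SS βs αs) ⊆ SS (βs - T • δβ u) (αs - T * δα u) := by
          intro i hi
          rw [hmemSS, hBval, hDTeq]
          rcases Finset.mem_insert.mp hi with rfl | hiS
          · have habs : |resNum x (βs - T • δβ u) (αs - T * δα u) i| = rt + T := by
              rw [hpath u T i]
              exact le_antisymm (hnumT i hj₂S) hj₂
            rw [habs]
            exact hdivr
          · have habs : |resNum x (βs - T • δβ u) (αs - T * δα u) i| = rt + T :=
              hpathS u T hT0 i hiS
            rw [habs]
            exact hdivr
        have hcard2 : (SS βs αs).card + 1 ≤ (SS (βs - T • δβ u) (αs - T * δα u)).card := by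
          calc (SS βs αs).card + 1 = (insert j₂ (SS βs αs)).card :=
            (Finset.card_insert_of_notMem hj₂S).symm
          _ ≤ _ := Finset.card_le_card hsub
        have hcard3 := hmaxcard _ _ hOptB
        omega
      · push_neg at hbig
        -- case (ii) : the ratio is exactly r along every ray, contradiction
        have hbigNpath : ∀ (u t : ℝ), 0 ≤ t →
            bigN hn0 x (βs - t • δβ u) (αs - t * δα u) = rt + t := by
          intro u t ht
          apply le_antisymm
          · apply Finset.sup'_le
            intro j _
            by_cases hj : j ∈ SS βs αs
            · exact le_of_eq (hpathS u t ht j hj)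
            · rw [hpath u t j]
              exact (hbig u t j ht hj).le
          · calc rt + t = |resNum x (βs - t • δβ u) (αs - t * δα u) i₀| :=
                (hpathS u t ht i₀ hi₀).symm
            _ ≤ _ := le_bigN hn0 x _ _ i₀
        have hDeq : ∀ (u t : ℝ), 0 ≤ t → r * ν (βs - t • δβ u) = rt + t := by
          intro u t ht
          apply le_antisymm _ (claim2 u t ht)
          calc r * ν (βs - t • δβ u) ≤ bigN hn0 x (βs - t • δβ u) (αs - t * δα u) :=
            claim1 _ _
          _ = rt + t := hbigNpath u t ht
        have hlin : ∀ (u t : ℝ), 0 ≤ t → t * ν (δβ u) ≤ 2 * ν βs + t * (1/r) := by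
          intro u t ht
          have h1 : ν (t • δβ u) ≤ ν βs + ν (βs - t • δβ u) := by
            have h2 : t • δβ u = βs - (βs - t • δβ u) := by
              funext ℓ
              simp only [Pi.sub_apply, Pi.smul_apply, smul_eq_mul]
              ring
            conv_lhs => rw [h2]
            exact map_sub_le_add ν _ _
          have h3 : ν (t • δβ u) = t * ν (δβ u) := by
            rw [map_smul_eq_mul, Real.norm_eq_abs, abs_of_nonneg ht]
          have h4 : r * ν (βs - t • δβ u) = rt + t := hDeq u t ht
          have h5 : ν (βs - t • δβ u) = (rt + t) / r :=
            (eq_div_iff (ne_of_gt hrpos)).mpr (by linarith [h4])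
          rw [h3, h5] at h1
          have h6 : rt / r = ν βs := by rw [hrt]; exact mul_div_cancel_left₀ _ (ne_of_gt hrpos)
          have h7 : (rt + t)/r = ν βs + t * (1/r) := by rw [add_div, h6]; ring
          linarith
        have hνδle : ∀ u : ℝ, ν (δβ u) ≤ 1/r := by
          intro u
          by_contra hgt
          push_neg at hgt
          set t0 : ℝ := (2 * ν βs + 1) / (ν (δβ u) - 1/r) with ht0
          have hden : 0 < ν (δβ u) - 1/r := by linarith
          have ht0pos : 0 < t0 := div_pos (by nlinarith [hνs]) hden
          have h15 := hlin u t0 ht0pos.le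
          have h8 : t0 * (ν (δβ u) - 1/r) = 2 * ν βs + 1 := by
            rw [ht0]
            exact div_mul_cancel₀ _ (ne_of_gt hden)
          nlinarith [h15, h8, hνs]
        have hκpos : 0 < ν κβ := hν κβ hκβ
        set U : ℝ := (2 * (1/r) + 1) / ν κβ with hU
        have hUpos : 0 < U := div_pos (by positivity) hκpos
        have h9 : ν (U • κβ) ≤ ν (δβ U) + ν (δβ 0) := by
          have h10 : U • κβ = δβ U - δβ 0 := by
            funext ℓ
            simp only [hδβ, Pi.sub_apply, Pi.add_apply, Pi.smul_apply, smul_eq_mul]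
            ring
          rw [h10]
          exact map_sub_le_add ν _ _
        have h11 : ν (U • κβ) = U * ν κβ := by
          rw [map_smul_eq_mul, Real.norm_eq_abs, abs_of_pos hUpos]
        have h12 : U * ν κβ = 2 * (1/r) + 1 := by
          rw [hU]
          exact div_mul_cancel₀ _ (ne_of_gt hκpos)
        have h13 := hνδle U
        have h14 := hνδle 0
        rw [h11, h12] at h9
        linarith
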